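/- arXiv:1307.6876 — 2 statements merged into one kernel-verified Lean document; each statement's English description precedes it below -/
import Mathlib

section
/- The set E equals the intersection of the closed unit disk with all the preimages f̃_j^{-1}(closed unit disk), j ≥ 1; it also equals the intersection of the closed disk of center 1 − p_1 and radius p_1 with all the sets f̃_j^{-1}(closed disk of center 1 − p_{j+1} and radius p_{j+1}), j ≥ 1. -/
open Filter Finset
open scoped ENNReal Topology ZeroAtInfty

noncomputable section

namespace AMFC

/-- `q d j = d 0 * d 1 * ... * d j`. -/
def q (d : ℕ → ℕ) (j : ℕ) : ℕ := ∏ i ∈ Finset.range (j + 1), d i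

/-- For `j ≥ 1`, `digit d n j = ⌊n / q_{j-1}⌋ mod d_j` is the `j`-th digit of `n`
in the Cantor system of numeration. -/
def digit (d : ℕ → ℕ) (n j : ℕ) : ℕ := (n / q d (j - 1)) % d j

/-- The counter `ζ_n = min { j ≥ 1 : a_j(n) ≠ d_j - 1 }`. -/
def zeta (d : ℕ → ℕ) (n : ℕ) : ℕ := sInf {j | 1 ≤ j ∧ digit d n j ≠ d j - 1}

open scoped Classical in
/-- The transition probabilities of the stochastic adding machine. -/
def s (d : ℕ → ℕ) (p : ℕ → ℝ) (n m : ℕ) : ℝ :=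
  if m = n + 1 then ∏ j ∈ Finset.Icc 1 (zeta d n), p j
  else if m = n then 1 - p 1
  else if h : ∃ r, 1 ≤ r ∧ r + 1 ≤ zeta d n ∧
      n = m + ∑ j ∈ Finset.Icc 1 r, (d j - 1) * q d (j - 1)
    then (1 - p (h.choose + 1)) * ∏ j ∈ Finset.Icc 1 h.choose, p j
  else 0

/-- `f j (z) = ((z - (1 - p j)) / p j) ^ (d j)`. -/
def f (d : ℕ → ℕ) (p : ℕ → ℝ) (j : ℕ) (z : ℂ) : ℂ :=
  ((z - (1 - (p j : ℂ))) / (p j : ℂ)) ^ d j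

/-- `ftil j = f j ∘ ... ∘ f 1`, with `ftil 0 = id`. -/
def ftil (d : ℕ → ℕ) (p : ℕ → ℝ) : ℕ → ℂ → ℂ
  | 0 => id
  | j + 1 => f d p (j + 1) ∘ ftil d p j

/-- The fibered filled Julia set `E = {z : limsup_j |ftil j z| < ∞}`. -/
def E (d : ℕ → ℕ) (p : ℕ → ℝ) : Set ℂ :=
  {z | Filter.limsup (fun j => (‖ftil d p j z‖₊ : ℝ≥0∞)) Filter.atTop < ⊤}

/-- `ι_λ(r) = (ftil (r-1) λ - (1 - p r)) / p r` for `r ≥ 1`. -/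
def iota (d : ℕ → ℕ) (p : ℕ → ℝ) (lam : ℂ) (r : ℕ) : ℂ :=
  (ftil d p (r - 1) lam - (1 - (p r : ℂ))) / (p r : ℂ)

/-- `v_λ(n) = ∏_{r ≥ 1} ι_λ(r) ^ a_r(n)`, a finite product. -/
def vlam (d : ℕ → ℕ) (p : ℕ → ℝ) (lam : ℂ) (n : ℕ) : ℂ :=
  ∏ᶠ r : ℕ, iota d p lam (r + 1) ^ digit d n (r + 1)

/-- The point spectrum of a continuous linear operator. -/
def pointSpectrum {M : Type*} [NormedAddCommGroup M] [NormedSpace ℂ M]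
    (T : M →L[ℂ] M) : Set ℂ :=
  {lam | ∃ v, v ≠ 0 ∧ T v = lam • v}

/-- The residual spectrum: `T - λI` is injective but its range is not dense. -/
def residualSpectrum {M : Type*} [NormedAddCommGroup M] [NormedSpace ℂ M]
    (T : M →L[ℂ] M) : Set ℂ :=
  {lam | Function.Injective ⇑(T - lam • (1 : M →L[ℂ] M)) ∧
    ¬ DenseRange ⇑(T - lam • (1 : M →L[ℂ] M))}

/-- The continuous spectrum: `T - λI` is injective with dense range, but not surjective. -/
def continuousSpectrum {M : Type*} [NormedAddCommGroup M] [NormedSpace ℂ M]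
    (T : M →L[ℂ] M) : Set ℂ :=
  {lam | Function.Injective ⇑(T - lam • (1 : M →L[ℂ] M)) ∧
    DenseRange ⇑(T - lam • (1 : M →L[ℂ] M)) ∧
    Set.range ⇑(T - lam • (1 : M →L[ℂ] M)) ≠ Set.univ}

lemma norm_f_eq (d : ℕ → ℕ) (p : ℕ → ℝ) {j : ℕ} (hpj : 0 < p j) (w : ℂ) :
    ‖f d p j w‖ = (‖w - (1 - (p j : ℂ))‖ / p j) ^ d j := by
  rw [f, norm_pow, norm_div]
  congr 2
  simp [Real.norm_eq_abs, abs_of_pos hpj]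

lemma norm_one_sub_p (p : ℕ → ℝ) {j : ℕ} (hpj : p j ∈ Set.Ioc (0 : ℝ) 1) :
    ‖(1 - (p j : ℂ))‖ = 1 - p j := by
  rw [show (1 - (p j : ℂ)) = ((1 - p j : ℝ) : ℂ) by push_cast; ring, Complex.norm_real,
    Real.norm_eq_abs, abs_of_nonneg (by linarith [hpj.2] : (0:ℝ) ≤ 1 - p j)]

lemma norm_f_le_one_iff (d : ℕ → ℕ) (p : ℕ → ℝ) {j : ℕ} (hdj : 2 ≤ d j)
    (hpj : p j ∈ Set.Ioc (0 : ℝ) 1) (w : ℂ) :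
    ‖f d p j w‖ ≤ 1 ↔ ‖w - (1 - (p j : ℂ))‖ ≤ p j := by
  rw [norm_f_eq d p hpj.1, pow_le_one_iff_of_nonneg (div_nonneg (norm_nonneg _) hpj.1.le) (by omega),
    div_le_one hpj.1]

lemma sq_le_norm_f (d : ℕ → ℕ) (p : ℕ → ℝ) {j : ℕ} (hdj : 2 ≤ d j)
    (hpj : p j ∈ Set.Ioc (0 : ℝ) 1) {w : ℂ} (hw : 1 < ‖w‖) :
    ‖w‖ ^ 2 ≤ ‖f d p j w‖ := by
  have h0 : 0 < p j := hpj.1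
  have h1 : ‖w‖ ≤ ‖w - (1 - (p j : ℂ))‖ / p j := by
    rw [le_div_iff₀ h0]
    have h2 : ‖w‖ - (1 - p j) ≤ ‖w - (1 - (p j : ℂ))‖ := by
      calc ‖w‖ - (1 - p j) = ‖w‖ - ‖(1 - (p j : ℂ))‖ := by rw [norm_one_sub_p p hpj]
        _ ≤ _ := norm_sub_norm_le _ _
    nlinarith [hpj.2]
  calc ‖w‖ ^ 2 ≤ (‖w - (1 - (p j : ℂ))‖ / p j) ^ 2 :=
        pow_le_pow_left₀ (by linarith) h1 2
    _ ≤ (‖w - (1 - (p j : ℂ))‖ / p j) ^ d j :=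
        pow_le_pow_right₀ (le_trans (by linarith) h1) hdj
    _ = ‖f d p j w‖ := (norm_f_eq d p h0 w).symm

/-- two descriptions of `E` as intersections of preimages of closed disks. -/
theorem stmt2 (d : ℕ → ℕ) (p : ℕ → ℝ)
    (hd0 : d 0 = 1) (hd : ∀ j, 1 ≤ j → 2 ≤ d j)
    (hp : ∀ j, 1 ≤ j → p j ∈ Set.Ioc (0 : ℝ) 1) :
    E d p = Metric.closedBall (0 : ℂ) 1 ∩
        ⋂ j : ℕ, ftil d p (j + 1) ⁻¹' Metric.closedBall (0 : ℂ) 1 ∧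
      E d p = Metric.closedBall (1 - (p 1 : ℂ)) (p 1) ∩
        ⋂ j : ℕ, ftil d p (j + 1) ⁻¹'
          Metric.closedBall (1 - (p (j + 2) : ℂ)) (p (j + 2)) := by
  -- key membership criterion
  have hstep : ∀ (j : ℕ) (z : ℂ), ftil d p (j + 1) z = f d p (j + 1) (ftil d p j z) :=
    fun j z => rfl
  have hmem : ∀ (j : ℕ) (z : ℂ),
      ‖ftil d p (j + 1) z‖ ≤ 1 ↔
        ftil d p j z ∈ Metric.closedBall (1 - (p (j + 1) : ℂ)) (p (j + 1)) := by
    intro j z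
    rw [hstep, norm_f_le_one_iff d p (hd _ (by omega)) (hp _ (by omega)),
      Metric.mem_closedBall, dist_eq_norm]
  -- a point with all iterates in the unit disk is itself in the unit disk
  have hz1 : ∀ z : ℂ, ‖ftil d p 1 z‖ ≤ 1 → ‖z‖ ≤ 1 := by
    intro z hz
    rw [hmem 0 z, Metric.mem_closedBall, dist_eq_norm] at hz
    have h1 := hp 1 le_rfl
    have hn := norm_one_sub_p p h1
    calc ‖z‖ = ‖(ftil d p 0 z - (1 - (p 1 : ℂ))) + (1 - (p 1 : ℂ))‖ := by
          simp [ftil]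
      _ ≤ ‖ftil d p 0 z - (1 - (p 1 : ℂ))‖ + ‖(1 - (p 1 : ℂ))‖ := norm_add_le _ _
      _ ≤ p 1 + (1 - p 1) := by rw [hn]; linarith
      _ = 1 := by ring
  -- E equals the set of points all of whose iterates stay in the unit disk
  have hE : E d p = {z : ℂ | ∀ j : ℕ, ‖ftil d p (j + 1) z‖ ≤ 1} := by
    ext z
    constructor
    · intro hz
      rw [Set.mem_setOf_eq]
      by_contra hcon
      push_neg at hcon
      obtain ⟨j0, hj0⟩ := hcon
      set t : ℝ := ‖ftil d p (j0 + 1) z‖ with ht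
      -- growth by induction
      have hgrow : ∀ k : ℕ, t ^ (k + 1) ≤ ‖ftil d p (j0 + 1 + k) z‖ := by
        intro k
        induction k with
        | zero => rw [pow_one]
        | succ k ih =>
          have hwk : 1 < ‖ftil d p (j0 + 1 + k) z‖ :=
            lt_of_lt_of_le (one_lt_pow₀ hj0 (by omega)) ih
          have h2 : ‖ftil d p (j0 + 1 + k) z‖ ^ 2 ≤ ‖ftil d p (j0 + 1 + (k + 1)) z‖ := by
            have := sq_le_norm_f d p (hd (j0 + 1 + k + 1) (by omega))
              (hp (j0 + 1 + k + 1) (by omega)) hwk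
            rw [show j0 + 1 + (k + 1) = (j0 + 1 + k) + 1 from rfl, hstep]
            exact this
          calc t ^ (k + 1 + 1) = t ^ (k + 1) * t := by ring
            _ ≤ ‖ftil d p (j0 + 1 + k) z‖ * ‖ftil d p (j0 + 1 + k) z‖ := by
                apply mul_le_mul ih (le_trans (le_self_pow₀ (by linarith) (by omega)) ih)
                  (by linarith) (norm_nonneg _)
            _ = ‖ftil d p (j0 + 1 + k) z‖ ^ 2 := by ring
            _ ≤ _ := h2
      -- hence the norms tend to infinity
      have htend : Tendsto (fun n => ‖ftil d p n z‖) atTop atTop := by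
        apply tendsto_atTop_mono' atTop
          (show ∀ᶠ n in atTop, t ^ (n - j0) ≤ ‖ftil d p n z‖ by
            filter_upwards [eventually_ge_atTop (j0 + 1)] with n hn
            have := hgrow (n - (j0 + 1))
            have hrw : j0 + 1 + (n - (j0 + 1)) = n := by omega
            have hrw2 : n - (j0 + 1) + 1 = n - j0 := by omega
            rwa [hrw, hrw2] at this)
        exact (tendsto_pow_atTop_atTop_of_one_lt hj0).comp
          (tendsto_atTop_atTop_of_monotone (fun a b hab => Nat.sub_le_sub_right hab j0)
            (fun b => ⟨b + j0, by omega⟩))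
      have htop : Tendsto (fun n => (‖ftil d p n z‖₊ : ℝ≥0∞)) atTop (𝓝 ⊤) := by
        rw [ENNReal.tendsto_nhds_top_iff_nnreal]
        intro r
        filter_upwards [htend.eventually_gt_atTop (r : ℝ)] with n hn
        rwa [ENNReal.coe_lt_coe, ← NNReal.coe_lt_coe, coe_nnnorm]
      have := htop.limsup_eq
      rw [E, Set.mem_setOf_eq, this] at hz
      exact lt_irrefl _ hz
    · intro hz
      have hb : ∀ n, (‖ftil d p n z‖₊ : ℝ≥0∞) ≤ 1 := by
        intro n
        have hnorm : ‖ftil d p n z‖ ≤ 1 := by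
          cases n with
          | zero => exact hz1 z (hz 0)
          | succ k => exact hz k
        have h1 : ‖ftil d p n z‖₊ ≤ 1 := by
          rwa [← NNReal.coe_le_coe, coe_nnnorm, NNReal.coe_one]
        exact_mod_cast h1
      refine lt_of_le_of_lt ?_ ENNReal.one_lt_top
      exact Filter.limsup_le_of_le (by isBoundedDefault) (Filter.Eventually.of_forall hb)
  constructor
  · rw [hE]
    ext z
    simp only [Set.mem_inter_iff, Set.mem_iInter, Set.mem_preimage, Set.mem_setOf_eq,
      Metric.mem_closedBall, dist_zero_right]
    exact ⟨fun h => ⟨hz1 z (h 0), h⟩, fun h => h.2⟩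
  · rw [hE]
    ext z
    simp only [Set.mem_inter_iff, Set.mem_iInter, Set.mem_preimage, Set.mem_setOf_eq]
    constructor
    · intro h
      constructor
      · have := h 0
        rw [hmem 0 z] at this
        simpa [ftil] using this
      · intro j
        have := h (j + 1)
        rwa [hmem (j + 1) z] at this
    · rintro ⟨h0, h⟩ j
      cases j with
      | zero =>
        rw [hmem 0 z]
        simpa [ftil] using h0
      | succ k =>
        rw [hmem (k + 1) z]
        exact h k

end AMFC
end
end

section
/- Let λ ∈ ℂ. A bounded sequence v = (v(n))_{n≥0} of complex numbers satisfies Σ_m s(n,m) v(m) = λ v(n) for every n ≥ 0 if and only if v(n) = v(0) · v_λ(n) for every n ≥ 0, where v_λ(n) = Π_{r≥1} ι_λ(r)^{a_r(n)}. -/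
open Filter Finset
open scoped ENNReal Topology ZeroAtInfty

noncomputable section

namespace AMFC

set_option linter.unusedSectionVars false


section
variable {d : ℕ → ℕ} (hd0 : d 0 = 1) (hd : ∀ j, 1 ≤ j → 2 ≤ d j)
include hd0 hd

lemma q_zero : q d 0 = 1 := by simp [q, hd0]
lemma q_succ (j : ℕ) : q d (j + 1) = q d j * d (j + 1) := by
  simp [q, Finset.prod_range_succ]
lemma q_pos (j : ℕ) : 0 < q d j := by
  apply Finset.prod_pos
  intro i hi
  rcases Nat.eq_zero_or_pos i with h | h
  · simp [h, hd0]
  · exact lt_of_lt_of_le (by norm_num) (hd i h)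
lemma q_dvd {i j : ℕ} (h : i ≤ j) : q d i ∣ q d j :=
  Finset.prod_dvd_prod_of_subset _ _ _ (Finset.range_subset_range.2 (by omega))
lemma q_mono {i j : ℕ} (h : i ≤ j) : q d i ≤ q d j :=
  Nat.le_of_dvd (q_pos hd0 hd j) (q_dvd hd0 hd h)
lemma lt_q_self (n : ℕ) : n < q d n := by
  induction n with
  | zero => simp [q_zero hd0 hd, Nat.mod_one]
  | succ k ih =>
    have h2 : 2 ≤ d (k+1) := hd _ (by omega)
    have := q_pos hd0 hd k
    calc k + 1 < q d k + 1 := by omega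
    _ ≤ q d k * d (k+1) := by nlinarith
    _ = q d (k+1) := (q_succ hd0 hd k).symm
lemma digit_lt {j : ℕ} (hj : 1 ≤ j) (n : ℕ) : digit d n j < d j :=
  Nat.mod_lt _ (by have := hd j hj; omega)
lemma digit_eq_zero_of_lt {n j : ℕ} (h : n < q d (j - 1)) : digit d n j = 0 := by
  simp [digit, Nat.div_eq_of_lt h]
lemma zeta_mem (n : ℕ) : 1 ≤ zeta d n ∧ digit d n (zeta d n) ≠ d (zeta d n) - 1 := by
  have hne : {j | 1 ≤ j ∧ digit d n j ≠ d j - 1}.Nonempty := by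
    refine ⟨n + 1, by omega, ?_⟩
    rw [digit_eq_zero_of_lt hd0 hd (by simpa using lt_q_self hd0 hd n)]
    have := hd (n+1) (by omega); omega
  exact Nat.sInf_mem hne
lemma zeta_pos (n : ℕ) : 1 ≤ zeta d n := (zeta_mem hd0 hd n).1
lemma digit_of_lt_zeta {n j : ℕ} (h1 : 1 ≤ j) (h2 : j < zeta d n) :
    digit d n j = d j - 1 := by
  by_contra hne
  exact Nat.notMem_of_lt_sInf h2 ⟨h1, hne⟩
lemma zeta_le (n : ℕ) : zeta d n ≤ n + 1 := by
  apply Nat.sInf_le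
  refine ⟨by omega, ?_⟩
  rw [digit_eq_zero_of_lt hd0 hd (by simpa using lt_q_self hd0 hd n)]
  have := hd (n+1) (by omega); omega

/-- n % q_j = q_j - 1 for j + 1 ≤ ζ. -/
lemma mod_q_max {n j : ℕ} (h : j + 1 ≤ zeta d n) : n % q d j = q d j - 1 := by
  induction j with
  | zero => simp [q_zero hd0 hd, Nat.mod_one]
  | succ k ih =>
    have hk : k + 1 < zeta d n := by omega
    have hdig : digit d n (k+1) = d (k+1) - 1 := digit_of_lt_zeta hd0 hd (by omega) hk
    have hm : n % q d k = q d k - 1 := ih (by omega)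
    have h2 : 2 ≤ d (k+1) := hd _ (by omega)
    have hqp := q_pos hd0 hd k
    rw [q_succ hd0 hd k, Nat.mod_mul, hm]
    have : n / q d k % d (k+1) = d (k+1) - 1 := by simpa [digit] using hdig
    rw [this]
    have hqp1 := q_pos hd0 hd (k+1)
    rw [q_succ hd0 hd k] at hqp1
    have h3 : q d k * (d (k+1) - 1) + q d k = q d k * d (k+1) := by
      rw [← Nat.mul_succ]; congr 1; omega
    omega

lemma q_le_succ_n {n j : ℕ} (h : j + 1 ≤ zeta d n) : q d j ≤ n + 1 := by
  have := mod_q_max hd0 hd h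
  have := Nat.mod_le n (q d j)
  have := q_pos hd0 hd j
  omega

/-- (n+1)/q_j = n/q_j + 1 when j+1 ≤ ζ. -/
lemma div_q_succ {n j : ℕ} (h : j + 1 ≤ zeta d n) :
    (n + 1) / q d j = n / q d j + 1 := by
  have hm := mod_q_max hd0 hd h
  have hq := q_pos hd0 hd j
  have hdm := Nat.div_add_mod n (q d j)
  have hcomm : n / q d j * q d j = q d j * (n / q d j) := Nat.mul_comm _ _
  have : n + 1 = (n / q d j + 1) * q d j := by
    rw [Nat.add_mul, Nat.one_mul]; omega
  rw [this, Nat.mul_div_cancel _ hq]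

/-- n % q_j < q_j - 1 for ζ ≤ j. -/
lemma mod_q_lt {n j : ℕ} (h : zeta d n ≤ j) : n % q d j < q d j - 1 := by
  set z := zeta d n with hz
  have hz1 : 1 ≤ z := zeta_pos hd0 hd n
  have hbase : n % q d z < q d z - 1 := by
    have hqz : q d z = q d (z-1) * d z := by
      have h := q_succ hd0 hd (z - 1)
      rw [Nat.sub_add_cancel hz1] at h
      exact h
    have hm : n % q d (z-1) = q d (z-1) - 1 := mod_q_max hd0 hd (by omega)
    have hdig : digit d n z ≠ d z - 1 := (zeta_mem hd0 hd n).2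
    have hdig2 : digit d n z < d z := digit_lt hd0 hd hz1 n
    have hqp := q_pos hd0 hd (z-1)
    have h2 := hd z hz1
    rw [hqz, Nat.mod_mul, hm]
    have : n / q d (z-1) % d z = digit d n z := rfl
    rw [this]
    have : digit d n z + 1 ≤ d z - 1 := by omega
    have h3 : q d (z-1) * (digit d n z + 1) = q d (z-1) * digit d n z + q d (z-1) :=
      Nat.mul_succ _ _
    have h4 : q d (z-1) * (digit d n z + 1) ≤ q d (z-1) * (d z - 1) :=
      Nat.mul_le_mul_left _ this
    have h5 : q d (z-1) * (d z - 1) + q d (z-1) = q d (z-1) * d z := by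
      rw [← Nat.mul_succ]; congr 1; omega
    omega
  by_contra hcon
  push_neg at hcon
  have hq := q_pos hd0 hd j
  have hle : n % q d j ≤ q d j - 1 := by
    have := Nat.mod_lt n (y := q d j) hq; omega
  have heq : n % q d j = q d j - 1 := le_antisymm hle hcon
  have hdvd : q d z ∣ q d j := q_dvd hd0 hd h
  have e1 : n % q d j % q d z = n % q d z := Nat.mod_mod_of_dvd n hdvd
  rw [heq] at e1
  have hqz := q_pos hd0 hd z
  obtain ⟨t, ht⟩ := hdvd
  have ht1 : 1 ≤ t := by
    rcases Nat.eq_zero_or_pos t with h0 | h0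
    · rw [h0, Nat.mul_zero] at ht; omega
    · exact h0
  have e2 : q d j - 1 = q d z * (t - 1) + (q d z - 1) := by
    rw [ht]
    have h3 : q d z * (t - 1) + q d z = q d z * t := by
      rw [← Nat.mul_succ]; congr 1; omega
    omega
  rw [e2, Nat.mul_add_mod] at e1
  rw [Nat.mod_eq_of_lt (by omega)] at e1
  omega

lemma div_q_succ_eq {n j : ℕ} (h : zeta d n ≤ j) :
    (n + 1) / q d j = n / q d j := by
  have hm := mod_q_lt hd0 hd h
  have hq := q_pos hd0 hd j
  have hdm := Nat.div_add_mod n (q d j)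
  have h1 : n + 1 = q d j * (n / q d j) + (n % q d j + 1) := by omega
  rw [h1, Nat.mul_add_div hq,
    Nat.div_eq_of_lt (show n % q d j + 1 < q d j by omega), Nat.add_zero]

lemma digit_succ_of_lt_zeta {n j : ℕ} (h1 : 1 ≤ j) (h2 : j < zeta d n) :
    digit d (n + 1) j = 0 := by
  have hdiv : (n + 1) / q d (j-1) = n / q d (j-1) + 1 :=
    div_q_succ hd0 hd (by omega)
  have hdig : digit d n j = d j - 1 := digit_of_lt_zeta hd0 hd h1 h2
  have h2d := hd j h1
  unfold digit at hdig ⊢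
  rw [hdiv]
  set m := n / q d (j-1) with hm
  have hdm := Nat.div_add_mod m (d j)
  have : m + 1 = d j * (m / d j + 1) := by
    rw [Nat.mul_add, Nat.mul_one]; omega
  rw [this, Nat.mul_mod_right]

lemma digit_succ_zeta (n : ℕ) :
    digit d (n + 1) (zeta d n) = digit d n (zeta d n) + 1 := by
  set z := zeta d n with hz
  have hz1 : 1 ≤ z := zeta_pos hd0 hd n
  have hdiv : (n + 1) / q d (z-1) = n / q d (z-1) + 1 :=
    div_q_succ hd0 hd (by omega)
  have hdig : digit d n z ≠ d z - 1 := (zeta_mem hd0 hd n).2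
  have hlt : digit d n z < d z := digit_lt hd0 hd hz1 n
  have h2d := hd z hz1
  unfold digit at hdig hlt ⊢
  rw [hdiv]
  set m := n / q d (z-1) with hm
  have hdm := Nat.div_add_mod m (d z)
  have h1 : m + 1 = d z * (m / d z) + (m % d z + 1) := by omega
  rw [h1, Nat.mul_add_mod, Nat.mod_eq_of_lt (by omega)]

lemma digit_succ_of_gt {n j : ℕ} (h : zeta d n < j) :
    digit d (n + 1) j = digit d n j := by
  unfold digit
  rw [div_q_succ_eq hd0 hd (by omega)]

lemma sum_digits (k : ℕ) :
    ∑ j ∈ Finset.Icc 1 k, (d j - 1) * q d (j - 1) = q d k - 1 := by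
  induction k with
  | zero => simp [q_zero hd0 hd]
  | succ k ih =>
    rw [Finset.sum_Icc_succ_top (by omega), ih]
    have h2 := hd (k+1) (by omega)
    have hq := q_pos hd0 hd k
    have hqs := q_succ hd0 hd k
    have h3 : q d k * (d (k+1) - 1) + q d k = q d k * d (k+1) := by
      rw [← Nat.mul_succ]; congr 1; omega
    have h4 : (d (k+1) - 1) * q d k = q d k * (d (k+1) - 1) := Nat.mul_comm _ _
    simp only [Nat.add_sub_cancel]
    omega

lemma nr_eq {n r : ℕ} (hr : r + 1 ≤ zeta d n) :
    n + 1 - q d r = q d r * (n / q d r) := by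
  have hm := mod_q_max hd0 hd hr
  have hq := q_pos hd0 hd r
  have hdm := Nat.div_add_mod n (q d r)
  omega

lemma digit_nr_le {n r j : ℕ} (hr : r + 1 ≤ zeta d n) (hj : 1 ≤ j) (hjr : j ≤ r) :
    digit d (n + 1 - q d r) j = 0 := by
  rw [nr_eq hd0 hd hr]
  obtain ⟨t, ht⟩ : q d (j-1) * d j ∣ q d r := by
    have : q d (j-1) * d j = q d j := by
      have h := q_succ hd0 hd (j-1)
      rw [Nat.sub_add_cancel hj] at h
      exact h.symm
    rw [this]
    exact q_dvd hd0 hd hjr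
  have hqj := q_pos hd0 hd (j-1)
  unfold digit
  set m := n / q d r with hm
  rw [ht]
  have h5 : q d (j-1) * d j * t * m = q d (j-1) * (d j * (t * m)) := by ring
  rw [h5, Nat.mul_div_cancel_left _ hqj, Nat.mul_mod_right]

lemma digit_nr_gt {n r j : ℕ} (hr : r + 1 ≤ zeta d n) (hjr : r < j) :
    digit d (n + 1 - q d r) j = digit d n j := by
  rw [nr_eq hd0 hd hr]
  obtain ⟨t, ht⟩ : q d r ∣ q d (j-1) := q_dvd hd0 hd (by omega)
  have hqr := q_pos hd0 hd r
  unfold digit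
  set m := n / q d r with hm
  rw [ht, ← Nat.div_div_eq_div_mul, Nat.mul_div_cancel_left _ hqr, hm,
    Nat.div_div_eq_div_mul]

end

lemma prod_range_shift {M : Type*} [CommMonoid M] (g : ℕ → M) (k : ℕ) :
    ∏ r ∈ Finset.range k, g (r + 1) = ∏ j ∈ Finset.Icc 1 k, g j := by
  induction k with
  | zero => simp
  | succ k ih => rw [Finset.prod_range_succ, ih, Finset.prod_Icc_succ_top (by omega)]

section
variable {d : ℕ → ℕ} {p : ℕ → ℝ} (hd0 : d 0 = 1) (hd : ∀ j, 1 ≤ j → 2 ≤ d j)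
  (hp : ∀ j, 1 ≤ j → p j ∈ Set.Ioc (0 : ℝ) 1) (lam : ℂ)
include hd0 hd hp

lemma p_ne {j : ℕ} (hj : 1 ≤ j) : (p j : ℂ) ≠ 0 := by
  have := (hp j hj).1
  simp only [ne_eq, Complex.ofReal_eq_zero]
  linarith

lemma iota_key {r : ℕ} (hr : 1 ≤ r) :
    (p r : ℂ) * iota d p lam r + (1 - (p r : ℂ)) = ftil d p (r - 1) lam := by
  have hne := p_ne hd0 hd hp (j := r) hr
  unfold iota
  field_simp
  ring

lemma ftil_pow {r : ℕ} (hr : 1 ≤ r) :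
    ftil d p r lam = iota d p lam r ^ d r := by
  obtain ⟨r', rfl⟩ : ∃ r', r = r' + 1 := ⟨r - 1, by omega⟩
  simp [ftil, f, iota]

lemma star (k : ℕ) :
    (∏ j ∈ Finset.Icc 1 (k+1), (p j : ℂ)) * iota d p lam (k+1)
      + (1 - (p 1 : ℂ)) * ∏ j ∈ Finset.Icc 1 k, iota d p lam j ^ (d j - 1)
      + ∑ r ∈ Finset.Icc 1 k, (1 - (p (r+1) : ℂ)) * (∏ j ∈ Finset.Icc 1 r, (p j : ℂ))
          * ∏ j ∈ Finset.Icc (r+1) k, iota d p lam j ^ (d j - 1)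
    = lam * ∏ j ∈ Finset.Icc 1 k, iota d p lam j ^ (d j - 1) := by
  induction k with
  | zero =>
    simp only [Finset.Icc_self, Finset.prod_singleton, Finset.Icc_eq_empty_of_lt
      (by omega : (1:ℕ) > 0), Finset.prod_empty, Finset.sum_empty, mul_one, add_zero]
    have h := iota_key hd0 hd hp lam (r := 1) le_rfl
    simpa [ftil] using h
  | succ k ih =>
    set X := iota d p lam (k+1) ^ (d (k+1) - 1) with hX
    have key1 := iota_key hd0 hd hp lam (r := k+2) (by omega)
    have key2 := ftil_pow hd0 hd hp lam (r := k+1) (by omega)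
    have key3 : X * iota d p lam (k+1) = iota d p lam (k+1) ^ d (k+1) := by
      rw [hX, ← pow_succ]
      congr 1
      have := hd (k+1) (by omega); omega
    have hsimp : (k : ℕ) + 2 - 1 = k + 1 := by omega
    rw [hsimp] at key1
    rw [Finset.prod_Icc_succ_top (by omega : 1 ≤ k+1+1) (fun j => (p j : ℂ)),
      Finset.prod_Icc_succ_top (by omega : 1 ≤ k+1) (fun j => iota d p lam j ^ (d j - 1)),
      Finset.sum_Icc_succ_top (by omega : 1 ≤ k+1)]
    have hsum : ∑ r ∈ Finset.Icc 1 k, (1 - (p (r+1) : ℂ)) * (∏ j ∈ Finset.Icc 1 r, (p j : ℂ))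
          * ∏ j ∈ Finset.Icc (r+1) (k+1), iota d p lam j ^ (d j - 1)
        = (∑ r ∈ Finset.Icc 1 k, (1 - (p (r+1) : ℂ)) * (∏ j ∈ Finset.Icc 1 r, (p j : ℂ))
          * ∏ j ∈ Finset.Icc (r+1) k, iota d p lam j ^ (d j - 1)) * X := by
      rw [Finset.sum_mul]
      refine Finset.sum_congr rfl fun r hr => ?_
      rw [Finset.mem_Icc] at hr
      rw [Finset.prod_Icc_succ_top (by omega : r + 1 ≤ k + 1)
        (fun j => iota d p lam j ^ (d j - 1))]
      ring
    rw [hsum]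
    simp only [Finset.Icc_eq_empty_of_lt (by omega : k+1+1 > k+1), Finset.prod_empty, mul_one]
    linear_combination X * ih + (∏ j ∈ Finset.Icc 1 (k+1), (p j : ℂ)) * key1
      + (∏ j ∈ Finset.Icc 1 (k+1), (p j : ℂ)) * key2
      - (∏ j ∈ Finset.Icc 1 (k+1), (p j : ℂ)) * key3

lemma vlam_prod {n N : ℕ} (h : n < q d N) :
    vlam d p lam n = ∏ r ∈ Finset.range N, iota d p lam (r+1) ^ digit d n (r+1) := by
  apply finprod_eq_prod_of_mulSupport_subset
  intro r hr
  simp only [Finset.coe_range, Set.mem_Iio]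
  by_contra hrN
  push_neg at hrN
  have h0 : digit d n (r+1) = 0 := by
    apply digit_eq_zero_of_lt hd0 hd
    simp only [Nat.add_sub_cancel]
    exact lt_of_lt_of_le h (q_mono hd0 hd hrN)
  simp [Function.mem_mulSupport, h0] at hr

lemma vlam_zero : vlam d p lam 0 = 1 := by
  have h := vlam_prod hd0 hd hp lam (n := 0) (N := 0) (q_pos hd0 hd 0)
  simpa using h

lemma vlam_eigen (n : ℕ) :
    (∏ j ∈ Finset.Icc 1 (zeta d n), (p j : ℂ)) * vlam d p lam (n+1)
      + (1 - (p 1 : ℂ)) * vlam d p lam n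
      + ∑ r ∈ Finset.Icc 1 (zeta d n - 1), (1 - (p (r+1) : ℂ))
          * (∏ j ∈ Finset.Icc 1 r, (p j : ℂ)) * vlam d p lam (n + 1 - q d r)
    = lam * vlam d p lam n := by
  obtain ⟨z', hz⟩ : ∃ z', zeta d n = z' + 1 :=
    ⟨zeta d n - 1, by have := zeta_pos hd0 hd n; omega⟩
  set N := n + 1 with hN
  have hzN : z' + 1 ≤ N := by have := zeta_le hd0 hd n; omega
  have hnN : n < q d N := lt_of_lt_of_le (lt_q_self hd0 hd n) (q_mono hd0 hd (by omega))
  have hn1N : n + 1 < q d N := by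
    have := lt_q_self hd0 hd N; omega
  set ι := iota d p lam with hι
  set T := ∏ r ∈ Finset.Ico (z'+1) N, ι (r+1) ^ digit d n (r+1) with hT
  set A := digit d n (z'+1) with hA
  -- value at n
  have Hn : vlam d p lam n
      = ((∏ j ∈ Finset.Icc 1 z', ι j ^ (d j - 1)) * ι (z'+1) ^ A) * T := by
    rw [vlam_prod hd0 hd hp lam hnN, ← Finset.prod_range_mul_prod_Ico _ hzN,
      Finset.prod_range_succ]
    congr 1
    congr 1
    rw [← prod_range_shift (fun j => ι j ^ (d j - 1)) z']
    refine Finset.prod_congr rfl fun r hr => ?_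
    rw [Finset.mem_range] at hr
    rw [digit_of_lt_zeta hd0 hd (by omega) (by omega)]
  -- value at n+1
  have Hn1 : vlam d p lam (n+1) = (ι (z'+1) ^ (A + 1)) * T := by
    rw [vlam_prod hd0 hd hp lam hn1N, ← Finset.prod_range_mul_prod_Ico _ hzN,
      Finset.prod_range_succ]
    have h1 : ∏ r ∈ Finset.range z', ι (r+1) ^ digit d (n+1) (r+1) = 1 := by
      apply Finset.prod_eq_one
      intro r hr
      rw [Finset.mem_range] at hr
      rw [digit_succ_of_lt_zeta hd0 hd (by omega) (by omega), pow_zero]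
    have h2 : digit d (n+1) (z'+1) = A + 1 := by
      rw [hA, ← hz, digit_succ_zeta hd0 hd n, hz]
    have h3 : ∏ r ∈ Finset.Ico (z'+1) N, ι (r+1) ^ digit d (n+1) (r+1) = T := by
      refine Finset.prod_congr rfl fun r hr => ?_
      rw [Finset.mem_Ico] at hr
      rw [digit_succ_of_gt hd0 hd (by omega)]
    rw [h1, h2, h3, one_mul]
  -- value at n + 1 - q d r
  have Hnr : ∀ r, 1 ≤ r → r ≤ z' → vlam d p lam (n + 1 - q d r)
      = ((∏ j ∈ Finset.Icc (r+1) z', ι j ^ (d j - 1)) * ι (z'+1) ^ A) * T := by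
    intro r hr1 hr2
    have hrz : r + 1 ≤ zeta d n := by omega
    have hmN : n + 1 - q d r < q d N := by
      have := q_pos hd0 hd r; omega
    rw [vlam_prod hd0 hd hp lam hmN, ← Finset.prod_range_mul_prod_Ico _ hzN,
      Finset.prod_range_succ]
    have h1 : ∏ r0 ∈ Finset.range z', ι (r0+1) ^ digit d (n + 1 - q d r) (r0+1)
        = ∏ j ∈ Finset.Icc (r+1) z', ι j ^ (d j - 1) := by
      rw [prod_range_shift (fun j => ι j ^ digit d (n + 1 - q d r) j) z']
      have e0 : Finset.Icc 1 z' = Finset.Ioc 0 z' := Finset.Icc_add_one_left_eq_Ioc 0 z'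
      have e1 : Finset.Icc (r+1) z' = Finset.Ioc r z' := Finset.Icc_add_one_left_eq_Ioc r z'
      rw [e0, e1, ← Finset.prod_Ioc_consecutive _ (Nat.zero_le r) hr2]
      have e2 : ∏ j ∈ Finset.Ioc 0 r, ι j ^ digit d (n + 1 - q d r) j = 1 := by
        apply Finset.prod_eq_one
        intro j hj
        rw [Finset.mem_Ioc] at hj
        rw [digit_nr_le hd0 hd hrz (by omega) (by omega), pow_zero]
      rw [e2, one_mul]
      refine Finset.prod_congr rfl fun j hj => ?_
      rw [Finset.mem_Ioc] at hj
      rw [digit_nr_gt hd0 hd hrz (by omega), digit_of_lt_zeta hd0 hd (by omega) (by omega)]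
    have h2 : digit d (n + 1 - q d r) (z'+1) = A := by
      rw [hA, ← hz, digit_nr_gt hd0 hd hrz (by omega), hz]
    have h3 : ∏ r0 ∈ Finset.Ico (z'+1) N, ι (r0+1) ^ digit d (n + 1 - q d r) (r0+1) = T := by
      refine Finset.prod_congr rfl fun r0 hr0 => ?_
      rw [Finset.mem_Ico] at hr0
      rw [digit_nr_gt hd0 hd hrz (by omega)]
    rw [h1, h2, h3]
  -- assemble
  rw [hz]
  simp only [Nat.add_sub_cancel]
  have hsum : ∑ r ∈ Finset.Icc 1 z', (1 - (p (r+1) : ℂ))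
        * (∏ j ∈ Finset.Icc 1 r, (p j : ℂ)) * vlam d p lam (n + 1 - q d r)
      = (∑ r ∈ Finset.Icc 1 z', (1 - (p (r+1) : ℂ)) * (∏ j ∈ Finset.Icc 1 r, (p j : ℂ))
        * ∏ j ∈ Finset.Icc (r+1) z', ι j ^ (d j - 1)) * (ι (z'+1) ^ A * T) := by
    rw [Finset.sum_mul]
    refine Finset.sum_congr rfl fun r hr => ?_
    rw [Finset.mem_Icc] at hr
    rw [Hnr r hr.1 hr.2]
    ring
  rw [hsum, Hn, Hn1]
  have hpow : ι (z'+1) ^ (A + 1) = ι (z'+1) ^ A * ι (z'+1) := pow_succ _ _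
  rw [hpow]
  have hstar := star hd0 hd hp lam z'
  rw [← hι] at hstar
  linear_combination (ι (z'+1) ^ A * T) * hstar

omit hp in
lemma q_strictMono : StrictMono (q d) := by
  apply strictMono_nat_of_lt_succ
  intro j
  have h1 := q_succ hd0 hd j
  have h2 := hd (j+1) (by omega)
  have h3 := q_pos hd0 hd j
  nlinarith

omit hp in
lemma q_two_le {r : ℕ} (hr : 1 ≤ r) : 2 ≤ q d r := by
  have h1 : q d 1 = d 1 := by
    rw [q_succ hd0 hd 0, q_zero hd0 hd, one_mul]
  have := hd 1 le_rfl
  have := q_mono hd0 hd hr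
  have h2 := q_mono hd0 hd (show 1 ≤ r from hr)
  omega

omit hp in
lemma nr_lt {n r : ℕ} (hr1 : 1 ≤ r) (hr2 : r + 1 ≤ zeta d n) : n + 1 - q d r < n := by
  have h1 := q_le_succ_n hd0 hd hr2
  have h2 := q_two_le hd0 hd hr1
  omega

omit hp in
lemma s_val_nr {n r : ℕ} (hr1 : 1 ≤ r) (hr2 : r + 1 ≤ zeta d n) :
    s d p n (n + 1 - q d r) = (1 - p (r+1)) * ∏ j ∈ Finset.Icc 1 r, p j := by
  have hlt := nr_lt hd0 hd hr1 hr2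
  have hq1 := q_le_succ_n hd0 hd hr2
  have hq2 := q_two_le hd0 hd hr1
  have hex : ∃ r', 1 ≤ r' ∧ r' + 1 ≤ zeta d n ∧
      n = (n + 1 - q d r) + ∑ j ∈ Finset.Icc 1 r', (d j - 1) * q d (j - 1) := by
    refine ⟨r, hr1, hr2, ?_⟩
    rw [sum_digits hd0 hd]
    omega
  unfold s
  rw [if_neg (by omega), if_neg (by omega), dif_pos hex]
  obtain ⟨hc1, hc2, hc3⟩ := hex.choose_spec
  rw [sum_digits hd0 hd] at hc3
  have hqc : 2 ≤ q d hex.choose := q_two_le hd0 hd hc1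
  have : q d hex.choose = q d r := by omega
  have hcr : hex.choose = r := (q_strictMono hd0 hd).injective this
  rw [hcr]

lemma row_sum (w : ℕ → ℂ) (n : ℕ) :
    ∑' m : ℕ, (s d p n m : ℂ) * w m
      = (∏ j ∈ Finset.Icc 1 (zeta d n), (p j : ℂ)) * w (n+1)
        + (1 - (p 1 : ℂ)) * w n
        + ∑ r ∈ Finset.Icc 1 (zeta d n - 1), (1 - (p (r+1) : ℂ))
            * (∏ j ∈ Finset.Icc 1 r, (p j : ℂ)) * w (n + 1 - q d r) := by
  set z := zeta d n with hz
  have hz1 : 1 ≤ z := zeta_pos hd0 hd n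
  set G : Finset ℕ := (Finset.Icc 1 (z-1)).image (fun r => n + 1 - q d r) with hG
  have hGlt : ∀ m ∈ G, m < n := by
    intro m hm
    rw [hG, Finset.mem_image] at hm
    obtain ⟨r, hr, rfl⟩ := hm
    rw [Finset.mem_Icc] at hr
    exact nr_lt hd0 hd hr.1 (by omega)
  set F : Finset ℕ := insert (n+1) (insert n G) with hF
  have hvan : ∀ m ∉ F, (s d p n m : ℂ) * w m = 0 := by
    intro m hm
    rw [hF, Finset.mem_insert, Finset.mem_insert] at hm
    push_neg at hm
    obtain ⟨h1, h2, h3⟩ := hm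
    have hs0 : s d p n m = 0 := by
      unfold s
      rw [if_neg h1, if_neg h2, dif_neg]
      rintro ⟨r, hr1, hr2, hr3⟩
      rw [sum_digits hd0 hd] at hr3
      have hq1 := q_le_succ_n hd0 hd hr2
      have hq2 := q_two_le hd0 hd hr1
      apply h3
      rw [hG, Finset.mem_image]
      exact ⟨r, Finset.mem_Icc.2 ⟨hr1, by omega⟩, by omega⟩
    rw [hs0]
    simp
  rw [tsum_eq_sum hvan, hF]
  have hn1G : (n+1) ∉ insert n G := by
    rw [Finset.mem_insert]
    push_neg
    exact ⟨by omega, fun hc => by have := hGlt _ hc; omega⟩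
  have hnG : n ∉ G := fun hc => by have := hGlt _ hc; omega
  rw [Finset.sum_insert hn1G, Finset.sum_insert hnG]
  have hs1 : s d p n (n+1) = ∏ j ∈ Finset.Icc 1 z, p j := by
    unfold s; rw [if_pos rfl]
  have hs2 : s d p n n = 1 - p 1 := by
    unfold s; rw [if_neg (by omega), if_pos rfl]
  have hs3 : ∑ m ∈ G, (s d p n m : ℂ) * w m
      = ∑ r ∈ Finset.Icc 1 (z-1), (1 - (p (r+1) : ℂ))
          * (∏ j ∈ Finset.Icc 1 r, (p j : ℂ)) * w (n + 1 - q d r) := by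
    rw [hG, Finset.sum_image]
    · refine Finset.sum_congr rfl fun r hr => ?_
      rw [Finset.mem_Icc] at hr
      rw [s_val_nr hd0 hd hr.1 (by omega)]
      push_cast
      ring
    · intro r1 hr1 r2 hr2 he
      rw [Finset.mem_coe, Finset.mem_Icc] at hr1 hr2
      have h1 := q_le_succ_n hd0 hd (n := n) (j := r1) (by omega)
      have h2 := q_le_succ_n hd0 hd (n := n) (j := r2) (by omega)
      have : q d r1 = q d r2 := by simp only at he; omega
      exact (q_strictMono hd0 hd).injective this
  rw [hs1, hs2, hs3]
  push_cast
  ring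

lemma prod_p_ne (k : ℕ) : (∏ j ∈ Finset.Icc 1 k, (p j : ℂ)) ≠ 0 := by
  rw [Finset.prod_ne_zero_iff]
  intro j hj
  rw [Finset.mem_Icc] at hj
  exact p_ne hd0 hd hp hj.1

theorem stmt3' (v : ℕ → ℂ) :
    (∀ n, ∑' m : ℕ, (s d p n m : ℂ) * v m = lam * v n) ↔
      ∀ n, v n = v 0 * vlam d p lam n := by
  constructor
  · intro h n
    induction n using Nat.strong_induction_on with
    | _ n ih =>
      match n with
      | 0 => rw [vlam_zero hd0 hd hp lam, mul_one]
      | Nat.succ m =>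
        have hz1 : 1 ≤ zeta d m := zeta_pos hd0 hd m
        have e1 := h m
        rw [row_sum hd0 hd hp v m] at e1
        rw [ih m (by omega)] at e1
        have hsv : ∑ r ∈ Finset.Icc 1 (zeta d m - 1), (1 - (p (r+1) : ℂ))
              * (∏ j ∈ Finset.Icc 1 r, (p j : ℂ)) * v (m + 1 - q d r)
            = v 0 * ∑ r ∈ Finset.Icc 1 (zeta d m - 1), (1 - (p (r+1) : ℂ))
              * (∏ j ∈ Finset.Icc 1 r, (p j : ℂ)) * vlam d p lam (m + 1 - q d r) := by
          rw [Finset.mul_sum]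
          refine Finset.sum_congr rfl fun r hr => ?_
          rw [Finset.mem_Icc] at hr
          rw [ih (m + 1 - q d r) (by have := q_pos hd0 hd r; omega)]
          ring
        rw [hsv] at e1
        have e2 := vlam_eigen hd0 hd hp lam m
        apply mul_left_cancel₀ (prod_p_ne hd0 hd hp (zeta d m))
        linear_combination e1 - v 0 * e2
  · intro h n
    rw [row_sum hd0 hd hp v n, h (n+1), h n]
    have hsv : ∑ r ∈ Finset.Icc 1 (zeta d n - 1), (1 - (p (r+1) : ℂ))
          * (∏ j ∈ Finset.Icc 1 r, (p j : ℂ)) * v (n + 1 - q d r)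
        = v 0 * ∑ r ∈ Finset.Icc 1 (zeta d n - 1), (1 - (p (r+1) : ℂ))
          * (∏ j ∈ Finset.Icc 1 r, (p j : ℂ)) * vlam d p lam (n + 1 - q d r) := by
      rw [Finset.mul_sum]
      refine Finset.sum_congr rfl fun r hr => ?_
      rw [h (n + 1 - q d r)]
      ring
    rw [hsv]
    linear_combination v 0 * vlam_eigen hd0 hd hp lam n

end

/-- a bounded sequence `v` satisfies the eigenvalue equation for `λ`
iff `v n = v 0 * v_λ(n)` for every `n`. -/
theorem stmt3 (d : ℕ → ℕ) (p : ℕ → ℝ)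
    (hd0 : d 0 = 1) (hd : ∀ j, 1 ≤ j → 2 ≤ d j)
    (hp : ∀ j, 1 ≤ j → p j ∈ Set.Ioc (0 : ℝ) 1)
    (lam : ℂ) (v : ℕ → ℂ) (hv : ∃ C : ℝ, ∀ n, ‖v n‖ ≤ C) :
    (∀ n, ∑' m : ℕ, (s d p n m : ℂ) * v m = lam * v n) ↔
      ∀ n, v n = v 0 * vlam d p lam n := by
  exact stmt3' hd0 hd hp lam v

end AMFC
end
end
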